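/- Let T be a game tree, let A ⊆ [T], and let B ⊆ A be a Gδ subset of Baire space. If player I has no winning strategy in G(A; T), then there is a quasi-strategy T* for II in T such that (i) [T*] ∩ B = ∅, and (ii) player I has no winning strategy in G(A ∩ [T*]; T*). -/

import Mathlib

/-- `T ⊆ List ℕ` is a game tree: nonempty, closed under prefixes, and with no
terminal nodes. -/
def IsGameTree (T : Set (List ℕ)) : Prop :=
  T.Nonempty ∧ (∀ p ∈ T, ∀ q : List ℕ, q <+: p → q ∈ T) ∧
    ∀ p ∈ T, ∃ n : ℕ, p ++ [n] ∈ T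

/-- The finite initial segment of `x : ℕ → ℕ` of length `k`, as a list. -/
def seg (x : ℕ → ℕ) (k : ℕ) : List ℕ := (List.range k).map x

/-- The body `[T]` of a tree: all infinite plays whose finite initial segments
all lie in `T`. -/
def body (T : Set (List ℕ)) : Set (ℕ → ℕ) := {x | ∀ k, seg x k ∈ T}

/-- The localization `T_p` of `T` at a position `p`: all positions comparable
with `p`. -/
def restrict (T : Set (List ℕ)) (p : List ℕ) : Set (List ℕ) :=
  {q ∈ T | q <+: p ∨ p <+: q}

/-- `x` is a play consistent with `σ` used as a strategy for player I, who
moves at even stages. -/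
def ConsWithI (σ : List ℕ → ℕ) (x : ℕ → ℕ) : Prop :=
  ∀ k, Even k → x k = σ (seg x k)

/-- `x` is a play consistent with `σ` used as a strategy for player II, who
moves at odd stages. -/
def ConsWithII (σ : List ℕ → ℕ) (x : ℕ → ℕ) : Prop :=
  ∀ k, ¬ Even k → x k = σ (seg x k)

/-- `σ` is a winning strategy for player I in the game `G(A; T)`: it assigns a
legal move at every position of `T` where it is I's turn, and every play in
`[T]` consistent with it lies in `A`. -/
def WinStratI (T : Set (List ℕ)) (A : Set (ℕ → ℕ)) (σ : List ℕ → ℕ) : Prop :=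
  (∀ p ∈ T, Even p.length → p ++ [σ p] ∈ T) ∧
    ∀ x ∈ body T, ConsWithI σ x → x ∈ A

/-- `σ` is a winning strategy for player II in the game `G(A; T)`: it assigns a
legal move at every position of `T` where it is II's turn, and every play in
`[T]` consistent with it lies outside `A`. -/
def WinStratII (T : Set (List ℕ)) (A : Set (ℕ → ℕ)) (σ : List ℕ → ℕ) : Prop :=
  (∀ p ∈ T, ¬ Even p.length → p ++ [σ p] ∈ T) ∧
    ∀ x ∈ body T, ConsWithII σ x → x ∉ A

/-- `S` is a quasi-strategy for player II in the game tree `T`: a game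
subtree which does not restrict I's moves. -/
def QuasiII (T S : Set (List ℕ)) : Prop :=
  IsGameTree S ∧ S ⊆ T ∧
    ∀ p ∈ S, Even p.length → ∀ n : ℕ, p ++ [n] ∈ T → p ++ [n] ∈ S

/-- Player II's non-losing quasi-strategy `T'` for `G(A ∩ [T]; T)`. -/
def NonLosing (T : Set (List ℕ)) (A : Set (ℕ → ℕ)) : Set (List ℕ) :=
  {p ∈ T | ∀ q : List ℕ, q <+: p → Even q.length →
    ¬ ∃ σ, WinStratI (restrict T q) (A ∩ body (restrict T q)) σ}

/-- A position `p` of `T'` is good (w.r.t. `A` and `B ⊆ A`) if there is a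
quasi-strategy `S` for II in `T'_p` with `[S] ∩ B = ∅` such that I has no
winning strategy in `G(A ∩ [S]; S)`. -/
def Good (T' : Set (List ℕ)) (A B : Set (ℕ → ℕ)) (p : List ℕ) : Prop :=
  p ∈ T' ∧ ∃ S : Set (List ℕ), QuasiII (restrict T' p) S ∧ body S ∩ B = ∅ ∧
    ¬ ∃ σ, WinStratI S (A ∩ body S) σ

namespace Covering

@[simp] lemma seg_length (x : ℕ → ℕ) (k : ℕ) : (seg x k).length = k := by
  simp [seg]

lemma seg_succ (x : ℕ → ℕ) (k : ℕ) : seg x (k+1) = seg x k ++ [x k] := by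
  simp [seg, List.range_succ]

@[simp] lemma seg_zero (x : ℕ → ℕ) : seg x 0 = [] := by simp [seg]

lemma seg_take (x : ℕ → ℕ) (k m : ℕ) : (seg x m).take k = seg x (min k m) := by
  simp [seg, ← List.map_take, List.take_range]

lemma seg_prefix (x : ℕ → ℕ) {k m : ℕ} (h : k ≤ m) : seg x k <+: seg x m := by
  rw [show seg x k = (seg x m).take k by rw [seg_take, min_eq_left h]]
  exact List.take_prefix _ _

lemma prefix_seg {t : List ℕ} {x : ℕ → ℕ} {m : ℕ} (h : t <+: seg x m) :
    t = seg x t.length := by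
  have := (List.prefix_iff_eq_take.1 h)
  rw [this, seg_take, min_eq_left]
  · simp
  · have := h.length_le; simpa using this

lemma seg_getD {x : ℕ → ℕ} {j k : ℕ} (h : j < k) : (seg x k).getD j 0 = x j := by
  rw [List.getD_eq_getElem?_getD]
  simp [seg, h]

/-- a list is an initial segment of a play extending it -/
lemma seg_eq_of_prefix {q : List ℕ} {x : ℕ → ℕ} {k : ℕ} (h : q <+: seg x k) :
    q = seg x q.length := prefix_seg h

lemma take_snoc_getD {q : List ℕ} {j : ℕ} (h : j < q.length) :
    q.take j ++ [q.getD j 0] = q.take (j+1) := by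
  have := List.take_concat_get h
  simpa [List.concat_eq_append, List.getD_eq_getElem?_getD, List.getElem?_eq_getElem h] using this

lemma prefix_snoc_getD {t q : List ℕ} (h : t <+: q) (hl : t.length < q.length) :
    t ++ [q.getD t.length 0] <+: q := by
  have ht : t = q.take t.length := List.prefix_iff_eq_take.1 h
  calc t ++ [q.getD t.length 0] = q.take t.length ++ [q.getD t.length 0] := by rw [← ht]
  _ = q.take (t.length + 1) := take_snoc_getD hl
  _ <+: q := List.take_prefix _ _

/-- comparable lists, one shorter, gives prefix -/
lemma prefix_of_comparable {t q : List ℕ} (h : t <+: q ∨ q <+: t) (hl : t.length ≤ q.length) :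
    t <+: q := by
  rcases h with h | h
  · exact h
  · rw [h.eq_of_length (le_antisymm h.length_le hl)]

lemma mem_body_iff {x : ℕ → ℕ} {U : Set (List ℕ)} : x ∈ body U ↔ ∀ k, seg x k ∈ U := Iff.rfl

lemma mem_restrict_iff {q p : List ℕ} {U : Set (List ℕ)} :
    q ∈ restrict U p ↔ q ∈ U ∧ (q <+: p ∨ p <+: q) := Iff.rfl

@[simp] lemma restrict_nil (U : Set (List ℕ)) : restrict U [] = U := by
  ext q; simp [restrict, List.nil_prefix]

lemma restrict_subset (U : Set (List ℕ)) (p : List ℕ) : restrict U p ⊆ U := fun _ h => h.1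

lemma mem_body_restrict {x : ℕ → ℕ} {U : Set (List ℕ)} {q : List ℕ} :
    x ∈ body (restrict U q) ↔ x ∈ body U ∧ seg x q.length = q := by
  constructor
  · intro h
    refine ⟨fun k => (h k).1, ?_⟩
    have := (h q.length).2
    rcases this with h1 | h1
    · exact h1.eq_of_length (by simp)
    · exact (h1.eq_of_length (by simp)).symm
  · rintro ⟨h1, h2⟩
    intro k
    refine ⟨h1 k, ?_⟩
    rcases le_total k q.length with hk | hk
    · left; rw [← h2]; exact seg_prefix x hk
    · right; rw [← h2]; exact seg_prefix x hk

lemma restrict_mono_base {U : Set (List ℕ)} {p q : List ℕ} (h : p <+: q) :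
    restrict U q ⊆ restrict U p := by
  rintro e ⟨he, h1 | h1⟩
  · exact ⟨he, List.prefix_or_prefix_of_prefix h1 h⟩
  · exact ⟨he, Or.inr (h.trans h1)⟩

lemma gameTree_restrict {U : Set (List ℕ)} (hU : IsGameTree U) {p : List ℕ} (hp : p ∈ U) :
    IsGameTree (restrict U p) := by
  obtain ⟨hne, hpc, hext⟩ := hU
  refine ⟨⟨p, hp, Or.inl (List.prefix_refl p)⟩, ?_, ?_⟩
  · rintro q ⟨hq, hcmp⟩ r hr
    refine ⟨hpc q hq r hr, ?_⟩
    rcases hcmp with h | h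
    · exact Or.inl (hr.trans h)
    · exact List.prefix_or_prefix_of_prefix hr h |>.symm.imp (fun h2 => h2) (fun h2 => h2) |>.symm
  · rintro q ⟨hq, hcmp⟩
    rcases hcmp with h | h
    · rcases eq_or_ne q p with rfl | hne'
      · obtain ⟨n, hn⟩ := hext q hq
        exact ⟨n, hn, Or.inr (by simp)⟩
      · have hl : q.length < p.length := lt_of_le_of_ne h.length_le
          (fun he => hne' (h.eq_of_length he))
        refine ⟨p.getD q.length 0, hpc p hp _ (prefix_snoc_getD h hl), Or.inl (prefix_snoc_getD h hl)⟩
    · obtain ⟨n, hn⟩ := hext q hq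
      exact ⟨n, hn, Or.inr (h.trans (by simp))⟩



open Classical in
noncomputable def junkMove (U : Set (List ℕ)) (r : List ℕ) : ℕ :=
  if h : ∃ n, r ++ [n] ∈ U then h.choose else 0

lemma junkMove_spec {U : Set (List ℕ)} {r : List ℕ} (h : ∃ n, r ++ [n] ∈ U) :
    r ++ [junkMove U r] ∈ U := by
  rw [junkMove, dif_pos h]; exact h.choose_spec

/-- legality in `restrict U q` forces a strategy to follow `q` below `q`. -/
lemma legal_follows {U : Set (List ℕ)} {q t : List ℕ} {σ : List ℕ → ℕ}
    (hleg : ∀ p ∈ restrict U q, Even p.length → p ++ [σ p] ∈ restrict U q)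
    (ht : t ∈ U) (htq : t <+: q) (hlt : t.length < q.length) (hev : Even t.length) :
    t ++ [σ t] <+: q := by
  have h1 : t ++ [σ t] ∈ restrict U q := hleg t ⟨ht, Or.inl htq⟩ hev
  refine prefix_of_comparable h1.2 (by simpa using hlt)

/-- legality forces consistency-below-the-base for plays extending the base. -/
lemma cons_below {U : Set (List ℕ)} {q : List ℕ} {σ : List ℕ → ℕ} {x : ℕ → ℕ}
    (hleg : ∀ p ∈ restrict U q, Even p.length → p ++ [σ p] ∈ restrict U q)
    (hx : x ∈ body U) (hxq : seg x q.length = q) {k : ℕ} (hk : k < q.length)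
    (hev : Even k) : σ (seg x k) = x k := by
  have htq : seg x k <+: q := by
    rw [← hxq]; exact seg_prefix x hk.le
  have h1 : seg x k ++ [σ (seg x k)] <+: q := by
    refine legal_follows hleg (hx k) htq (by simpa using hk) (by simpa using hev)
  have h2 : seg x k ++ [σ (seg x k)] <+: seg x q.length := by rw [hxq]; exact h1
  have h3 : seg x k ++ [σ (seg x k)] = seg x (k+1) := by
    have := prefix_seg h2
    simpa using this
  rw [seg_succ] at h3
  have := List.append_inj_right h3 (by simpa using congrArg List.length h3)
  simpa using this

/-- if every play through `q` is in `A'`, then I trivially wins `G(A'; restrict U q)`. -/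
lemma trivial_win {U : Set (List ℕ)} (hU : IsGameTree U) {q : List ℕ} (hq : q ∈ U)
    (A' : Set (ℕ → ℕ)) (h : ∀ x ∈ body (restrict U q), x ∈ A') :
    ∃ σ, WinStratI (restrict U q) A' σ := by
  refine ⟨junkMove (restrict U q), ?_, fun x hx _ => h x hx⟩
  intro p hp _
  refine junkMove_spec ?_
  obtain ⟨hpU, hcmp⟩ := hp
  rcases hcmp with hc | hc
  · rcases eq_or_ne p q with rfl | hne
    · obtain ⟨n, hn⟩ := hU.2.2 p hpU
      exact ⟨n, hn, Or.inr (by simp)⟩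
    · have hl : p.length < q.length := lt_of_le_of_ne hc.length_le
        (fun he => hne (hc.eq_of_length he))
      exact ⟨q.getD p.length 0, hU.2.1 q hq _ (prefix_snoc_getD hc hl),
        Or.inl (prefix_snoc_getD hc hl)⟩
  · obtain ⟨n, hn⟩ := hU.2.2 p hpU
    exact ⟨n, hn, Or.inr (hc.trans (by simp))⟩

/-- every node of a game tree lies on an infinite branch. -/
lemma exists_branch {S : Set (List ℕ)} (hS : IsGameTree S) {q : List ℕ} (hq : q ∈ S) :
    ∃ x ∈ body S, seg x q.length = q := by
  classical
  -- chain of extensions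
  have hstep : ∀ t ∈ S, ∃ n, t ++ [n] ∈ S := hS.2.2
  let g : ℕ → List ℕ := fun i => Nat.rec q
    (fun _ t => t ++ [if h : ∃ n, t ++ [n] ∈ S then h.choose else 0]) i
  have hg0 : g 0 = q := rfl
  have hgS : ∀ i, g i ∈ S := by
    intro i; induction i with
    | zero => exact hq
    | succ i ih =>
      show g i ++ [_] ∈ S
      have h : ∃ n, g i ++ [n] ∈ S := hstep _ ih
      rw [dif_pos h]; exact h.choose_spec
  have hglen : ∀ i, (g i).length = q.length + i := by
    intro i; induction i with
    | zero => rfl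
    | succ i ih => show (g i ++ [_]).length = _; simp [ih]; ring
  have hgmono : ∀ i j, i ≤ j → g i <+: g j := by
    intro i j hij
    induction j with
    | zero => simpa [Nat.le_zero.1 hij]
    | succ j ih =>
      rcases Nat.lt_or_ge i (j+1) with h | h
      · exact (ih (Nat.lt_succ_iff.1 h)).trans ⟨_, rfl⟩
      · have : i = j + 1 := le_antisymm hij h
        simp [this]
  have getD_agree : ∀ (p r : List ℕ), (p <+: r) → ∀ j, j < p.length →
      p.getD j 0 = r.getD j 0 := by
    intro p r h j hj
    rw [List.getD_eq_getElem?_getD, List.getD_eq_getElem?_getD,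
      List.getElem?_eq_getElem hj, List.getElem?_eq_getElem (lt_of_lt_of_le hj h.length_le)]
    rw [h.getElem hj]
  set x : ℕ → ℕ := fun j => (g (j+1)).getD j 0 with hx
  have hxval : ∀ i j, j < (g i).length → (g i).getD j 0 = x j := by
    intro i j hj
    rcases le_total i (j+1) with h | h
    · exact getD_agree _ _ (hgmono i (j+1) h) j hj
    · exact (getD_agree _ _ (hgmono (j+1) i h) j (by have := hglen (j+1); omega)).symm
  have key : ∀ i, seg x (q.length + i) = g i := by
    intro i
    apply List.ext_getElem (by simp [hglen])
    intro j hj hj2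
    simp only [seg, List.getElem_map, List.getElem_range]
    have := hxval i j (by simpa using hj2)
    rw [List.getD_eq_getElem?_getD, List.getElem?_eq_getElem (by simpa using hj2)] at this
    simpa using this.symm
  refine ⟨x, ?_, ?_⟩
  · intro k
    rcases le_or_gt q.length k with h | h
    · have : k = q.length + (k - q.length) := by omega
      rw [this, key]; exact hgS _
    · have hpre : seg x k <+: q := by
        have h0 := key 0
        rw [Nat.add_zero] at h0
        rw [show (q:List ℕ) = g 0 from rfl, ← h0]
        exact seg_prefix _ h.le
      exact hS.2.1 q hq _ hpre
  · have h0 := key 0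
    rw [Nat.add_zero] at h0
    exact h0



variable {U : Set (List ℕ)} {A' : Set (ℕ → ℕ)}

lemma nonLosing_subset : NonLosing U A' ⊆ U := fun _ h => h.1

lemma nonLosing_prefix_closed {p r : List ℕ} (hU : IsGameTree U) (hp : p ∈ NonLosing U A')
    (hr : r <+: p) : r ∈ NonLosing U A' :=
  ⟨hU.2.1 p hp.1 r hr, fun q hq hev => hp.2 q (hq.trans hr) hev⟩

lemma nil_mem_nonLosing (hU : IsGameTree U)
    (h : ¬ ∃ σ, WinStratI U (A' ∩ body U) σ) : ([] : List ℕ) ∈ NonLosing U A' := by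
  obtain ⟨p, hp⟩ := hU.1
  refine ⟨hU.2.1 p hp [] (List.nil_prefix), ?_⟩
  intro q hq _
  rw [List.prefix_nil.1 hq, restrict_nil]
  exact h

lemma nonLosing_evenExt {p : List ℕ} (hp : p ∈ NonLosing U A') (hev : Even p.length)
    (n : ℕ) (hn : p ++ [n] ∈ U) : p ++ [n] ∈ NonLosing U A' := by
  refine ⟨hn, fun q hq hqev => ?_⟩
  rcases eq_or_ne q (p ++ [n]) with rfl | hne
  · exfalso; rw [List.length_append] at hqev; simp at hqev
    exact (Nat.even_add_one.1 hqev) hev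
  · have hql : q.length ≤ p.length := by
      have := hq.length_le; simp at this
      rcases Nat.lt_or_ge q.length (p.length + 1) with h | h
      · omega
      · exfalso; exact hne (hq.eq_of_length (by simp; omega))
    exact hp.2 q (List.prefix_of_prefix_length_le hq (List.prefix_append p [n]) (by simpa)) hqev

lemma nonLosing_oddExt {p : List ℕ} (hU : IsGameTree U) (hp : p ∈ NonLosing U A')
    (hodd : ¬ Even p.length) : ∃ n, p ++ [n] ∈ NonLosing U A' := by
  classical
  by_contra hall
  push_neg at hall
  -- every legal extension admits a winning strategy for I
  have hall' : ∀ n, p ++ [n] ∈ U → ∃ σ, WinStratI (restrict U (p ++ [n]))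
      (A' ∩ body (restrict U (p ++ [n]))) σ := by
    intro n hn
    have := hall n
    rw [NonLosing] at this
    simp only [Set.mem_setOf_eq, not_and, not_forall] at this
    obtain ⟨q, hq, hqev, hqws⟩ := this hn
    rcases eq_or_ne q (p ++ [n]) with rfl | hne
    · exact not_not.1 hqws
    · exfalso
      have hql : q.length ≤ p.length := by
        have := hq.length_le; simp at this
        rcases Nat.lt_or_ge q.length (p.length + 1) with h | h
        · omega
        · exact absurd (hq.eq_of_length (by simp; omega)) hne
      exact hqws (hp.2 q (List.prefix_of_prefix_length_le hq (List.prefix_append p [n])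
        (by simpa)) hqev)
  -- the strategy choice
  have σf : ∀ n, ∃ σ, p ++ [n] ∈ U → WinStratI (restrict U (p ++ [n]))
      (A' ∩ body (restrict U (p ++ [n]))) σ := by
    intro n
    by_cases hn : p ++ [n] ∈ U
    · obtain ⟨σ, hσ⟩ := hall' n hn; exact ⟨σ, fun _ => hσ⟩
    · exact ⟨fun _ => 0, fun h => absurd h hn⟩
  choose σs hσs using σf
  -- base point q = p.dropLast
  have hpne : p ≠ [] := by intro h; subst h; simp at hodd
  set q : List ℕ := p.dropLast with hqdef
  have hqp : q <+: p := List.dropLast_prefix p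
  have hqlen : q.length = p.length - 1 := by simp [hqdef]
  have hplen : 0 < p.length := List.length_pos_iff.2 hpne
  have hqlen' : q.length + 1 = p.length := by omega
  have hqev : Even q.length := by
    rcases Nat.even_or_odd p.length with h | h
    · exact absurd h hodd
    · rw [hqlen]; rcases h with ⟨m, hm⟩; exact ⟨m, by omega⟩
  have hqU : U ∈ Set.univ := trivial
  have hqmem : q ∈ U := hU.2.1 p hp.1 q hqp
  have hqsnoc : q ++ [p.getD q.length 0] = p := by
    have h1 : p.take q.length = q := (List.prefix_iff_eq_take.1 hqp).symm
    calc q ++ [p.getD q.length 0] = p.take q.length ++ [p.getD q.length 0] := by rw [h1]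
    _ = p.take (q.length + 1) := take_snoc_getD (by omega)
    _ = p := by rw [hqlen']; exact List.take_length
  have hnows : ¬ ∃ σ, WinStratI (restrict U q) (A' ∩ body (restrict U q)) σ :=
    hp.2 q hqp hqev
  apply hnows
  -- build the combined strategy
  refine ⟨fun r =>
    if p <+: r ∧ p ≠ r then σs (r.getD p.length 0) r
    else if r = q then p.getD q.length 0
    else if r <+: q ∧ r ≠ q then q.getD r.length 0
    else junkMove (restrict U q) r, ?_, ?_⟩
  · -- legality
    intro r hr hrev
    beta_reduce
    by_cases h1 : p <+: r ∧ p ≠ r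
    · rw [if_pos h1]
      set n := r.getD p.length 0 with hndef
      have hplr : p.length < r.length := lt_of_le_of_ne h1.1.length_le
        (fun he => h1.2 (h1.1.eq_of_length he))
      have hpn : p ++ [n] <+: r := prefix_snoc_getD h1.1 hplr
      have hpnU : p ++ [n] ∈ U := hU.2.1 r hr.1 _ hpn
      have hws := hσs n hpnU
      have := hws.1 r ⟨hr.1, Or.inr hpn⟩ hrev
      exact restrict_mono_base (hqp.trans (List.prefix_append p [n])) this
    · rw [if_neg h1]
      by_cases h2 : r = q
      · rw [if_pos h2]; subst h2
        rw [hqsnoc]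
        exact ⟨hp.1, Or.inr hqp⟩
      · rw [if_neg h2]
        by_cases h3 : r <+: q ∧ r ≠ q
        · rw [if_pos h3]
          have hlr : r.length < q.length := lt_of_le_of_ne h3.1.length_le
            (fun he => h3.2 (h3.1.eq_of_length he))
          have := prefix_snoc_getD h3.1 hlr
          exact ⟨hU.2.1 q hqmem _ this, Or.inl this⟩
        · rw [if_neg h3]
          refine junkMove_spec ?_
          have hcmp := hr.2
          have hqr : q <+: r := by
            rcases hcmp with hc | hc
            · exact absurd ⟨hc, h2⟩ h3
            · exact hc
          obtain ⟨n, hn⟩ := hU.2.2 r hr.1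
          exact ⟨n, hn, Or.inr (hqr.trans (List.prefix_append r [n]))⟩
  · -- winning
    intro x hx hcons
    have hxU : x ∈ body U := fun k => (hx k).1
    have hxq : seg x q.length = q := (mem_body_restrict.1 hx).2
    -- the first move after q is forced to rebuild p
    have hxq1 : x q.length = p.getD q.length 0 := by
      have := hcons q.length hqev
      rw [hxq] at this
      rw [this]
      beta_reduce
      have hnp : ¬ (p <+: q ∧ p ≠ q) := by
        rintro ⟨hc, -⟩
        have := hc.length_le; omega
      rw [if_neg hnp, if_pos rfl]
    have hxp : seg x p.length = p := by
      rw [← hqlen', seg_succ, hxq, hxq1, hqsnoc]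
    set n := x p.length with hndef
    have hxpn : seg x (p.length + 1) = p ++ [n] := by rw [seg_succ, hxp]
    have hpnU : p ++ [n] ∈ U := by rw [← hxpn]; exact hxU _
    have hws := hσs n hpnU
    have hxbpn : x ∈ body (restrict U (p ++ [n])) :=
      mem_body_restrict.2 ⟨hxU, by rw [List.length_append, List.length_singleton]; exact hxpn⟩
    have hconsn : ConsWithI (σs n) x := by
      intro k hkev
      rcases Nat.lt_or_ge k (p.length + 1) with hk | hk
      · exact (cons_below hws.1 hxU (by
          rw [List.length_append, List.length_singleton]; exact hxpn) (by
          rw [List.length_append, List.length_singleton]; exact hk) hkev).symm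
      · have hk' : p.length < k := by omega
        have := hcons k hkev
        rw [this]
        beta_reduce
        have hppre : p <+: seg x k := by
          rw [show p = seg x p.length from hxp.symm]
          exact seg_prefix x hk'.le
        have hpne2 : p ≠ seg x k := by
          intro he
          have := congrArg List.length he
          simp at this; omega
        rw [if_pos ⟨hppre, hpne2⟩, seg_getD hk']
    have := hws.2 x hxbpn hconsn
    exact ⟨this.1, hx⟩

lemma nonLosing_gameTree (hU : IsGameTree U)
    (h : ¬ ∃ σ, WinStratI U (A' ∩ body U) σ) : IsGameTree (NonLosing U A') := by
  refine ⟨⟨[], nil_mem_nonLosing hU h⟩, fun p hp r hr => nonLosing_prefix_closed hU hp hr, ?_⟩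
  intro p hp
  by_cases hev : Even p.length
  · obtain ⟨n, hn⟩ := hU.2.2 p hp.1
    exact ⟨n, nonLosing_evenExt hp hev n hn⟩
  · exact nonLosing_oddExt hU hp hev

lemma nonLosing_quasi (hU : IsGameTree U)
    (h : ¬ ∃ σ, WinStratI U (A' ∩ body U) σ) : QuasiII U (NonLosing U A') :=
  ⟨nonLosing_gameTree hU h, nonLosing_subset, fun p hp hev n hn => nonLosing_evenExt hp hev n hn⟩

open Classical in
/-- a chosen winning strategy for I at `restrict U t`, or a junk legal strategy. -/
noncomputable def wsOr (U : Set (List ℕ)) (A' : Set (ℕ → ℕ)) (t : List ℕ) : List ℕ → ℕ :=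
  if h : ∃ τ, WinStratI (restrict U t) (A' ∩ body (restrict U t)) τ then h.choose
  else junkMove U

lemma wsOr_spec {U : Set (List ℕ)} {A' : Set (ℕ → ℕ)} {t : List ℕ}
    (h : ∃ τ, WinStratI (restrict U t) (A' ∩ body (restrict U t)) τ) :
    WinStratI (restrict U t) (A' ∩ body (restrict U t)) (wsOr U A' t) := by
  rw [wsOr, dif_pos h]; exact h.choose_spec

open Classical in
noncomputable def exitIdx (S : Set (List ℕ)) (r : List ℕ) : ℕ :=
  if h : ∃ k, r.take k ∉ S then Nat.find h else 0

lemma nonLosing_no_ws (hU : IsGameTree U)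
    (h : ¬ ∃ σ, WinStratI U (A' ∩ body U) σ) :
    ¬ ∃ σ, WinStratI (NonLosing U A') (A' ∩ body (NonLosing U A')) σ := by
  classical
  set S := NonLosing U A' with hSdef
  rintro ⟨σ, hσleg, hσwin⟩
  apply h
  refine ⟨fun r => if r ∈ S then σ r else wsOr U A' (r.take (exitIdx S r)) r, ?_, ?_⟩
  · -- legality on U
    intro r hr hrev
    beta_reduce
    by_cases hrS : r ∈ S
    · rw [if_pos hrS]
      exact nonLosing_subset (hσleg r hrS hrev)
    · rw [if_neg hrS]
      set t := r.take (exitIdx S r) with htdef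
      have htr : t <+: r := List.take_prefix _ r
      by_cases hws : ∃ τ, WinStratI (restrict U t) (A' ∩ body (restrict U t)) τ
      · exact restrict_subset U t ((wsOr_spec hws).1 r ⟨hr, Or.inr htr⟩ hrev)
      · rw [wsOr, dif_neg hws]
        exact junkMove_spec (hU.2.2 r hr)
  · -- winning
    intro x hx hcons
    by_cases hall : ∀ k, seg x k ∈ S
    · have hxS : x ∈ body S := hall
      have hconsS : ConsWithI σ x := by
        intro k hkev
        have := hcons k hkev
        beta_reduce at this
        rwa [if_pos (hall k)] at this
      exact ⟨(hσwin x hxS hconsS).1, hx⟩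
    · push_neg at hall
      have hk : ∃ k, seg x k ∉ S := hall
      set k₀ := Nat.find hk with hk₀def
      set q := seg x k₀ with hqdef
      have hqnS : q ∉ S := Nat.find_spec hk
      have hmin : ∀ j, j < k₀ → seg x j ∈ S := fun j hj => not_not.1 (Nat.find_min hk hj)
      have hqU : q ∈ U := hx k₀
      -- k₀ is even
      have hk₀ev : Even k₀ := by
        by_contra hodd
        have hk₀pos : 0 < k₀ := by
          rcases Nat.eq_zero_or_pos k₀ with h0 | h0
          · exfalso; rw [h0] at hodd; exact hodd (Even.zero)
          · exact h0
        have hprev : seg x (k₀ - 1) ∈ S := hmin _ (by omega)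
        have hprevev : Even (k₀ - 1) := by
          rcases Nat.even_or_odd k₀ with he | ho
          · exact absurd he hodd
          · rcases ho with ⟨m, hm⟩; exact ⟨m, by omega⟩
        have hmove := hcons (k₀ - 1) (by simpa using hprevev)
        beta_reduce at hmove
        rw [if_pos hprev] at hmove
        have := hσleg (seg x (k₀ - 1)) hprev (by simpa using hprevev)
        rw [← hmove, ← seg_succ] at this
        have hsucc : k₀ - 1 + 1 = k₀ := by omega
        rw [hsucc] at this
        exact hqnS this
      -- I has a winning strategy at q
      have hws : ∃ τ, WinStratI (restrict U q) (A' ∩ body (restrict U q)) τ := by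
        rw [hSdef, NonLosing] at hqnS
        simp only [Set.mem_setOf_eq, not_and, not_forall] at hqnS
        obtain ⟨r, hrq, hrev, hrws⟩ := hqnS hqU
        rcases eq_or_ne r q with rfl | hne
        · exact not_not.1 hrws
        · exfalso
          have hrl : r.length < q.length := lt_of_le_of_ne hrq.length_le
            (fun he => hne (hrq.eq_of_length he))
          have hrseg : r = seg x r.length := prefix_seg (by rw [hqdef] at hrq; exact hrq)
          have : seg x r.length ∈ S := hmin _ (by rw [hqdef] at hrl; simpa using hrl)
          rw [← hrseg] at this
          exact hrws (this.2 r (List.prefix_refl r) hrev)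
      have hτ := wsOr_spec hws
      set τ := wsOr U A' q with hτdef
      -- σ' follows τ from k₀ on
      have hxbq : x ∈ body (restrict U q) := mem_body_restrict.2 ⟨hx, by
        rw [hqdef, seg_length]⟩
      have hnotS : ∀ k, k₀ ≤ k → seg x k ∉ S := by
        intro k hkk hmem
        exact hqnS (nonLosing_prefix_closed hU hmem (by rw [hqdef]; exact seg_prefix x hkk))
      have hexit : ∀ k, k₀ ≤ k → (seg x k).take (exitIdx S (seg x k)) = q := by
        intro k hkk
        have hex : ∃ j, (seg x k).take j ∉ S := ⟨k₀, by
          rw [seg_take, min_eq_left hkk, ← hqdef]; exact hqnS⟩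
        rw [exitIdx, dif_pos hex]
        have hfind : Nat.find hex = k₀ := by
          rw [Nat.find_eq_iff]
          constructor
          · rw [seg_take, min_eq_left hkk, ← hqdef]; exact hqnS
          · intro j hj
            rw [not_not, seg_take]
            rcases le_total j k with hjk | hjk
            · rw [min_eq_left hjk]; exact hmin j hj
            · rw [min_eq_right hjk]; exact hmin k (lt_of_le_of_lt hjk hj)
        rw [hfind, seg_take, min_eq_left hkk]
      have hconsτ : ConsWithI τ x := by
        intro k hkev
        rcases Nat.lt_or_ge k k₀ with hlt | hge
        · exact (cons_below hτ.1 hx (by rw [hqdef, seg_length]) (by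
            rw [hqdef, seg_length]; exact hlt) hkev).symm
        · have := hcons k hkev
          beta_reduce at this
          rw [if_neg (hnotS k hge), hexit k hge] at this
          exact this
      have := hτ.2 x hxbq hconsτ
      exact ⟨this.1, hx⟩



/-- basic neighbourhood determined by a finite sequence. -/
def Nb (q : List ℕ) : Set (ℕ → ℕ) := {x | seg x q.length = q}

lemma mem_Nb_seg (x : ℕ → ℕ) (k : ℕ) : x ∈ Nb (seg x k) := by simp [Nb]

lemma Nb_anti_seg {x : ℕ → ℕ} {j k : ℕ} (h : j ≤ k) : Nb (seg x k) ⊆ Nb (seg x j) := by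
  intro y hy
  simp only [Nb, Set.mem_setOf_eq, seg_length] at *
  rw [← min_eq_left h, ← seg_take, ← seg_take, hy]

lemma getD_eq_of_prefix {t r : List ℕ} (h : t <+: r) {j : ℕ} (hj : j < t.length) :
    t.getD j 0 = r.getD j 0 := by
  rw [List.getD_eq_getElem?_getD, List.getD_eq_getElem?_getD,
    List.getElem?_eq_getElem hj, List.getElem?_eq_getElem (lt_of_lt_of_le hj h.length_le),
    h.getElem hj]

lemma take_eq_of_prefix {t r : List ℕ} (h : t <+: r) {k : ℕ} (hk : k ≤ t.length) :
    t.take k = r.take k := by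
  conv_lhs => rw [List.prefix_iff_eq_take.1 h]
  rw [List.take_take, min_eq_left hk]

lemma exists_nb_subset {V : Set (ℕ → ℕ)} (hV : IsOpen V) {x : ℕ → ℕ} (hx : x ∈ V) :
    ∃ k, Nb (seg x k) ⊆ V := by
  obtain ⟨I, u, hu, hsub⟩ := isOpen_pi_iff.1 hV x hx
  rcases I.eq_empty_or_nonempty with rfl | hne
  · exact ⟨0, fun y _ => hsub (by simp)⟩
  · refine ⟨(I.max' hne) + 1, fun y hy => hsub fun i hi => ?_⟩
    have hilt : i < I.max' hne + 1 := Nat.lt_succ_of_le (I.le_max' i hi)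
    have hyx : y i = x i := by
      have h1 : seg y (I.max' hne + 1) = seg x (I.max' hne + 1) := by
        simpa [Nb] using hy
      have h2 := congrArg (fun l => l.getD i 0) h1
      rwa [seg_getD hilt, seg_getD hilt] at h2
    rw [hyx]
    exact (hu i hi).2

lemma isGδ_seq {B : Set (ℕ → ℕ)} (h : IsGδ B) :
    ∃ U : ℕ → Set (ℕ → ℕ), (∀ n, IsOpen (U n)) ∧ B = ⋂ n, U n := by
  obtain ⟨S, hopen, hcnt, rfl⟩ := h
  rcases S.eq_empty_or_nonempty with rfl | hne
  · exact ⟨fun _ => Set.univ, fun _ => isOpen_univ, by simp⟩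
  · obtain ⟨f, rfl⟩ := hcnt.exists_eq_range hne
    exact ⟨f, fun n => hopen _ ⟨n, rfl⟩, by simp [Set.sInter_range]⟩

/-- the base point belongs to any quasi-strategy for II in the localized tree. -/
lemma mem_of_quasiRestrict {T' : Set (List ℕ)} {q : List ℕ} {W : Set (List ℕ)}
    (h : QuasiII (restrict T' q) W) : q ∈ W := by
  have claim : ∀ j, j ≤ q.length → q.take j ∈ W := by
    intro j
    induction j with
    | zero =>
      intro _
      obtain ⟨w, hw⟩ := h.1.1
      simpa using h.1.2.1 w hw [] (List.nil_prefix)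
    | succ j ih =>
      intro hj
      have ht : q.take j ∈ W := ih (by omega)
      obtain ⟨n, hn⟩ := h.1.2.2 _ ht
      have hmem : q.take j ++ [n] ∈ restrict T' q := h.2.1 hn
      have hlen : (q.take j ++ [n]).length = j + 1 := by
        simp [List.length_take]; omega
      have hpre : q.take j ++ [n] <+: q :=
        prefix_of_comparable hmem.2 (by rw [hlen]; exact hj)
      have : q.take j ++ [n] = q.take (j+1) := by
        rw [List.prefix_iff_eq_take.1 hpre, hlen]
      rwa [this] at hn
  have := claim q.length le_rfl
  simpa using this

open Classical in
noncomputable def Wit (T' : Set (List ℕ)) (A B : Set (ℕ → ℕ)) (q : List ℕ) : Set (List ℕ) :=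
  if h : Good T' A B q then h.2.choose else ∅

lemma Wit_spec {T' : Set (List ℕ)} {A B : Set (ℕ → ℕ)} {q : List ℕ} (h : Good T' A B q) :
    QuasiII (restrict T' q) (Wit T' A B q) ∧ body (Wit T' A B q) ∩ B = ∅ ∧
      ¬ ∃ σ, WinStratI (Wit T' A B q) (A ∩ body (Wit T' A B q)) σ := by
  rw [Wit, dif_pos h]; exact h.2.choose_spec

lemma prefix_ne_lt {a b : List ℕ} (h : a <+: b) (hne : a ≠ b) : a.length < b.length :=
  lt_of_le_of_ne h.length_le (fun he => hne (h.eq_of_length he))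

/-- the open payoff used in the key claim. -/
def Opn (T' : Set (List ℕ)) (A B Bn : Set (ℕ → ℕ)) (p : List ℕ) : Set (ℕ → ℕ) :=
  {x | ∃ k, p <+: seg x k ∧ p ≠ seg x k ∧ ¬ Good T' A B (seg x k) ∧ Nb (seg x k) ⊆ Bn}

lemma keyClaim {T' : Set (List ℕ)} (hT' : IsGameTree T') (A B Bn : Set (ℕ → ℕ))
    (hBn : B ⊆ Bn) (hBno : IsOpen Bn) {p : List ℕ} (hp : p ∈ T')
    (hng : ¬ Good T' A B p) :
    ∃ σ, WinStratI (restrict T' p) ((A ∪ Opn T' A B Bn p) ∩ body (restrict T' p)) σ := by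
  classical
  by_contra h
  set U₀ := restrict T' p with hU₀def
  set A' := A ∪ Opn T' A B Bn p with hA'def
  have hU₀tree : IsGameTree U₀ := gameTree_restrict hT' hp
  have hnws : ¬ ∃ σ, WinStratI U₀ (A' ∩ body U₀) σ := h
  set S := NonLosing U₀ A' with hSdef
  have hStree : IsGameTree S := nonLosing_gameTree hU₀tree hnws
  have hSquasi : QuasiII U₀ S := nonLosing_quasi hU₀tree hnws
  have hSnws : ¬ ∃ σ, WinStratI S (A' ∩ body S) σ := nonLosing_no_ws hU₀tree hnws
  have hSpc : ∀ e ∈ S, ∀ r, r <+: e → r ∈ S :=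
    fun e he r hr => nonLosing_prefix_closed hU₀tree he hr
  -- every position of S strictly beyond p whose neighbourhood is inside Bn is Good
  have claimA : ∀ q, q ∈ S → p <+: q → p ≠ q → Nb q ⊆ Bn → Good T' A B q := by
    intro q hqS hpq hpne hnb
    by_contra hqg
    obtain ⟨q', hq'S, hqq', hq'ev⟩ : ∃ q', q' ∈ S ∧ q <+: q' ∧ Even q'.length := by
      by_cases hev : Even q.length
      · exact ⟨q, hqS, List.prefix_refl q, hev⟩
      · obtain ⟨n, hn⟩ := hStree.2.2 q hqS
        exact ⟨q ++ [n], hn, List.prefix_append q [n], by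
          rw [List.length_append, List.length_singleton]
          exact Nat.even_add_one.2 hev⟩
    have hq'U₀ : q' ∈ U₀ := nonLosing_subset hq'S
    have htriv : ∃ σ, WinStratI (restrict U₀ q') (A' ∩ body (restrict U₀ q')) σ := by
      refine trivial_win hU₀tree hq'U₀ _ ?_
      intro x hx
      have hxq' : seg x q'.length = q' := (mem_body_restrict.1 hx).2
      have hxq : seg x q.length = q := by
        have : q <+: seg x q'.length := by rw [hxq']; exact hqq'
        exact (prefix_seg this).symm
      refine ⟨Or.inr ⟨q.length, ?_, ?_, ?_, ?_⟩, hx⟩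
      · rw [hxq]; exact hpq
      · rw [hxq]; exact hpne
      · rw [hxq]; exact hqg
      · rw [hxq]; exact hnb
    exact hq'S.2 q' (List.prefix_refl q') hq'ev htriv
  -- switch positions
  set Sw : List ℕ → Prop := fun r => r ∈ S ∧ p <+: r ∧ p ≠ r ∧ Nb r ⊆ Bn ∧
    ∀ r', r' <+: r → r' ≠ r → p <+: r' → p ≠ r' → ¬ (r' ∈ S ∧ Nb r' ⊆ Bn) with hSwdef
  have hSwGood : ∀ r, Sw r → Good T' A B r :=
    fun r hr => claimA r hr.1 hr.2.1 hr.2.2.1 hr.2.2.2.1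
  have hSwuniq : ∀ r r', Sw r → Sw r' → (r <+: r' ∨ r' <+: r) → r = r' := by
    intro r r' hr hr' hcmp
    by_contra hne
    rcases hcmp with hc | hc
    · exact hr'.2.2.2.2 r hc hne hr.2.1 hr.2.2.1 ⟨hr.1, hr.2.2.2.1⟩
    · exact hr.2.2.2.2 r' hc (fun he => hne he.symm) hr'.2.1 hr'.2.2.1 ⟨hr'.1, hr'.2.2.2.1⟩
  have noSwBelow : ∀ r, Sw r → ∀ r', r' <+: r → r' ≠ r → ¬ Sw r' := by
    intro r hr r' hpre hne hsw
    exact hne (hSwuniq r' r hsw hr (Or.inl hpre))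
  set W : List ℕ → Set (List ℕ) := fun r => Wit T' A B r with hWdef
  -- the combined quasi-strategy
  set SStar : Set (List ℕ) := {e | (e ∈ S ∧ ∀ r, r <+: e → r ≠ e → ¬ Sw r) ∨
    (∃ r, Sw r ∧ r <+: e ∧ r ≠ e ∧ e ∈ W r)} with hSSdef
  have hnilS : ([] : List ℕ) ∈ S := by
    obtain ⟨w, hw⟩ := hStree.1
    exact hSpc w hw [] (List.nil_prefix)
  have hnilSS : ([] : List ℕ) ∈ SStar := by
    refine Or.inl ⟨hnilS, ?_⟩
    intro r hr hne
    exact absurd (List.prefix_nil.1 hr) hne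
  have starPrefix : ∀ e ∈ SStar, ∀ e', e' <+: e → e' ∈ SStar := by
    rintro e he e' he'
    rcases he with ⟨heS, hnosw⟩ | ⟨r, hswr, hre, hrne, heW⟩
    · refine Or.inl ⟨hSpc e heS e' he', ?_⟩
      intro r hr hrne
      refine hnosw r (hr.trans he') ?_
      intro hre
      subst hre
      exact hrne (he'.eq_of_length (le_antisymm he'.length_le (hr.length_le))).symm
    · have hWspec := Wit_spec (hSwGood r hswr)
      rcases List.prefix_or_prefix_of_prefix he' hre with hc | hc
      · -- e' ⊑ r
        refine Or.inl ⟨hSpc r hswr.1 e' hc, ?_⟩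
        intro r₂ h₂ hne₂
        exact noSwBelow r hswr r₂ (h₂.trans hc) (by
          intro he2; subst he2
          exact absurd (le_antisymm (h₂.trans hc).length_le
            (le_of_lt (lt_of_lt_of_le (prefix_ne_lt h₂ hne₂) hc.length_le))) (by
              have := prefix_ne_lt h₂ hne₂
              have := hc.length_le
              omega))
      · -- r ⊑ e'
        rcases eq_or_ne r e' with rfl | hne
        · refine Or.inl ⟨hswr.1, fun r₂ h₂ hne₂ => noSwBelow r hswr r₂ h₂ hne₂⟩
        · exact Or.inr ⟨r, hswr, hc, hne, hWspec.1.1.2.1 e heW e' he'⟩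
  have starSub : SStar ⊆ U₀ := by
    rintro e he
    rcases he with ⟨heS, -⟩ | ⟨r, hswr, hre, -, heW⟩
    · exact nonLosing_subset heS
    · have hWspec := Wit_spec (hSwGood r hswr)
      have hmem := hWspec.1.2.1 heW
      have heT' : e ∈ T' := hmem.1
      refine ⟨heT', Or.inr (hswr.2.1.trans hre)⟩
  have starStep : ∀ e ∈ SStar, (∃ n, e ++ [n] ∈ SStar) ∧
      (Even e.length → ∀ n, e ++ [n] ∈ U₀ → e ++ [n] ∈ SStar) := by
    intro e he
    have hsnocne : ∀ (t : List ℕ) (n : ℕ) (r : List ℕ), r <+: t → r ≠ t ++ [n] := by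
      intro t n r hr he2
      have h1 := hr.length_le
      have h2 := congrArg List.length he2
      simp at h2; omega
    rcases he with ⟨heS, hnosw⟩ | ⟨r, hswr, hre, hrne, heW⟩
    · by_cases hswe : Sw e
      · have hWspec := Wit_spec (hSwGood e hswe)
        have heW : e ∈ W e := mem_of_quasiRestrict hWspec.1
        constructor
        · obtain ⟨n, hn⟩ := hWspec.1.1.2.2 e heW
          exact ⟨n, Or.inr ⟨e, hswe, List.prefix_append e [n],
            hsnocne e n e (List.prefix_refl e), hn⟩⟩
        · intro hev n hn
          have hmem : e ++ [n] ∈ restrict T' e := ⟨hn.1, Or.inr (List.prefix_append e [n])⟩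
          have := hWspec.1.2.2 e heW hev n hmem
          exact Or.inr ⟨e, hswe, List.prefix_append e [n],
            hsnocne e n e (List.prefix_refl e), this⟩
      · have hfirst : ∀ n, e ++ [n] ∈ S → e ++ [n] ∈ SStar := by
          intro n hn
          refine Or.inl ⟨hn, ?_⟩
          intro r hr hrne
          have hre : r <+: e := List.prefix_of_prefix_length_le hr (List.prefix_append e [n]) (by
            have h1 := hr.length_le
            have h2 : r.length ≠ e.length + 1 := by
              intro hl
              exact hrne (hr.eq_of_length (by simp [hl]))
            simp at h1
            simp
            omega)
          rcases eq_or_ne r e with rfl | hne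
          · exact hswe
          · exact hnosw r hre hne
        constructor
        · obtain ⟨n, hn⟩ := hStree.2.2 e heS
          exact ⟨n, hfirst n hn⟩
        · intro hev n hn
          exact hfirst n (hSquasi.2.2 e heS hev n hn)
    · have hWspec := Wit_spec (hSwGood r hswr)
      constructor
      · obtain ⟨n, hn⟩ := hWspec.1.1.2.2 e heW
        exact ⟨n, Or.inr ⟨r, hswr, hre.trans (List.prefix_append e [n]),
          hsnocne e n r hre, hn⟩⟩
      · intro hev n hn
        have hmem : e ++ [n] ∈ restrict T' r :=
          ⟨hn.1, Or.inr (hre.trans (List.prefix_append e [n]))⟩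
        have := hWspec.1.2.2 e heW hev n hmem
        exact Or.inr ⟨r, hswr, hre.trans (List.prefix_append e [n]), hsnocne e n r hre, this⟩
  have starQuasi : QuasiII U₀ SStar := by
    refine ⟨⟨⟨[], hnilSS⟩, starPrefix, fun e he => (starStep e he).1⟩, starSub,
      fun e he hev n hn => (starStep e he).2 hev n hn⟩
  have starBody : body SStar ∩ B = ∅ := by
    rw [Set.eq_empty_iff_forall_notMem]
    rintro x ⟨hxSS, hxB⟩
    by_cases hsec : ∃ k r, Sw r ∧ r <+: seg x k ∧ r ≠ seg x k ∧ seg x k ∈ W r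
    · obtain ⟨k, r, hswr, hrk, hrne, hkW⟩ := hsec
      have hWspec := Wit_spec (hSwGood r hswr)
      have hxW : x ∈ body (W r) := by
        intro j
        rcases lt_or_ge j k with hj | hj
        · exact hWspec.1.1.2.1 _ hkW _ (seg_prefix x hj.le)
        · have hrj : r <+: seg x j := hrk.trans (seg_prefix x hj)
          have hrjne : r ≠ seg x j := by
            intro he2
            have h1 := prefix_ne_lt hrk hrne
            have h2 := congrArg List.length he2
            simp at h1 h2
            omega
          rcases hxSS j with ⟨-, hnosw⟩ | ⟨r', hswr', hr'j, hr'ne, hjW⟩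
          · exact absurd hswr (hnosw r hrj hrjne)
          · have heq : r' = r := hSwuniq r' r hswr' hswr
              (List.prefix_or_prefix_of_prefix hr'j hrj)
            rwa [heq] at hjW
      exact Set.eq_empty_iff_forall_notMem.1 hWspec.2.1 x ⟨hxW, hxB⟩
    · have hfirst : ∀ k, seg x k ∈ S := by
        intro k
        rcases hxSS k with ⟨h1, -⟩ | ⟨r, h1, h2, h3, h4⟩
        · exact h1
        · exact absurd ⟨k, r, h1, h2, h3, h4⟩ hsec
      have hxbU₀ : x ∈ body U₀ := fun k => nonLosing_subset (hfirst k)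
      have hxp : seg x p.length = p := (mem_body_restrict.1 hxbU₀).2
      obtain ⟨k₁, hk₁⟩ := exists_nb_subset hBno (hBn hxB)
      have hex : ∃ j, p.length < j ∧ Nb (seg x j) ⊆ Bn :=
        ⟨max k₁ (p.length + 1), lt_of_lt_of_le (Nat.lt_succ_self _) (le_max_right _ _),
          (Nb_anti_seg (le_max_left _ _)).trans hk₁⟩
      set j₀ := Nat.find hex with hj₀def
      have hj₀ := Nat.find_spec hex
      have hswj₀ : Sw (seg x j₀) := by
        refine ⟨hfirst j₀, ?_, ?_, hj₀.2, ?_⟩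
        · rw [← hxp]; exact seg_prefix x hj₀.1.le
        · intro he2
          have := congrArg List.length he2
          simp at this
          omega
        · intro r' hr' hne' hpr' hpne'
          rintro ⟨hr'S, hnbr'⟩
          have hr'seg : r' = seg x r'.length := prefix_seg hr'
          have hlt : r'.length < j₀ := by
            have := prefix_ne_lt hr' hne'
            simpa using this
          have hgt : p.length < r'.length := prefix_ne_lt hpr' hpne'
          exact Nat.find_min hex hlt ⟨hgt, by rw [← hr'seg]; exact hnbr'⟩
      rcases hxSS (j₀ + 1) with ⟨-, hnosw⟩ | ⟨r, hswr, hrj, hrne, hjW⟩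
      · refine hnosw _ (seg_prefix x (Nat.le_succ _)) ?_ hswj₀
        intro he2
        have := congrArg List.length he2
        simp at this
      · exact hsec ⟨j₀ + 1, r, hswr, hrj, hrne, hjW⟩
  have starNws : ¬ ∃ σ, WinStratI SStar (A ∩ body SStar) σ := by
    rintro ⟨σ, hσleg, hσwin⟩
    set R : Set (List ℕ) :=
      {e | e ∈ SStar ∧ ∀ k, k < e.length → Even k → e.getD k 0 = σ (e.take k)} with hRdef
    by_cases hreach : ∃ e ∈ R, Sw e
    · obtain ⟨e, ⟨heSS, hecons⟩, hswe⟩ := hreach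
      have hWspec := Wit_spec (hSwGood e hswe)
      have heW : e ∈ W e := mem_of_quasiRestrict hWspec.1
      have hWsub : ∀ t ∈ W e, t ∈ SStar := by
        intro t ht
        rcases (hWspec.1.2.1 ht).2 with hc | hc
        · exact starPrefix e heSS t hc
        · rcases eq_or_ne e t with rfl | hne
          · exact heSS
          · exact Or.inr ⟨e, hswe, hc, hne, ht⟩
      have hmove : ∀ t ∈ W e, Even t.length → t ++ [σ t] ∈ W e := by
        intro t ht htev
        by_cases het : e <+: t
        · have htSS : t ∈ SStar := hWsub t ht
          have hmv := hσleg t htSS htev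
          have hesnoc : e <+: t ++ [σ t] := het.trans (List.prefix_append t _)
          have hesnocne : e ≠ t ++ [σ t] := by
            intro he2
            have h1 := het.length_le
            have h2 := congrArg List.length he2
            simp at h2; omega
          rcases hmv with ⟨-, hnosw⟩ | ⟨r, hswr, hrt, hrne, htW⟩
          · exact absurd hswe (hnosw e hesnoc hesnocne)
          · have heq : r = e := hSwuniq r e hswr hswe
              (List.prefix_or_prefix_of_prefix hrt hesnoc)
            rwa [heq] at htW
        · -- t is a proper prefix of e
          have htc := (hWspec.1.2.1 ht).2
          have hte : t <+: e := by
            rcases htc with hc | hc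
            · exact hc
            · exact absurd hc het
          have htne : t ≠ e := by
            intro he2; subst he2; exact het (List.prefix_refl t)
          have hlt : t.length < e.length := prefix_ne_lt hte htne
          have htake : t = e.take t.length := List.prefix_iff_eq_take.1 hte
          have hσt : σ t = e.getD t.length 0 := by
            have := hecons t.length hlt htev
            rw [← htake] at this
            exact this.symm
          have hpre : t ++ [σ t] <+: e := by
            have h2 := take_snoc_getD (q := e) hlt
            rw [← htake] at h2
            rw [hσt, h2]
            exact List.take_prefix _ e
          exact hWspec.1.1.2.1 e heW _ hpre
      refine hWspec.2.2 ⟨σ, hmove, ?_⟩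
      intro x hxW hxcons
      have hxSS : x ∈ body SStar := fun k => hWsub _ (hxW k)
      have := hσwin x hxSS hxcons
      exact ⟨this.1, hxW⟩
    · push_neg at hreach
      apply hSnws
      refine ⟨fun t => if t ∈ SStar ∧ (∀ r, r <+: t → ¬ Sw r) then σ t
        else junkMove S t, ?_, ?_⟩
      · intro t htS htev
        beta_reduce
        by_cases hcond : t ∈ SStar ∧ (∀ r, r <+: t → ¬ Sw r)
        · rw [if_pos hcond]
          have hmv := hσleg t hcond.1 htev
          rcases hmv with ⟨hmS, -⟩ | ⟨r, hswr, hrt, hrne, -⟩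
          · exact hmS
          · exfalso
            have hrt' : r <+: t := List.prefix_of_prefix_length_le hrt
              (List.prefix_append t _) (by
                have h1 := hrt.length_le
                have h2 : r.length ≠ t.length + 1 := by
                  intro hl
                  exact hrne (hrt.eq_of_length (by simp [hl]))
                simp at h1; simp; omega)
            exact hcond.2 r hrt' hswr
        · rw [if_neg hcond]
          exact junkMove_spec (hStree.2.2 t htS)
      · intro x hxS hxcons
        have key : ∀ k, seg x k ∈ SStar ∧ (∀ r, r <+: seg x k → ¬ Sw r) ∧
            (∀ j, j < k → Even j → x j = σ (seg x j)) := by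
          intro k
          induction k with
          | zero =>
            refine ⟨by rw [seg_zero]; exact hnilSS, ?_, by omega⟩
            intro r hr
            rw [seg_zero] at hr
            rw [List.prefix_nil.1 hr]
            intro hsw
            exact hsw.2.2.1 (List.prefix_nil.1 hsw.2.1).symm.symm
          | succ k ih =>
            obtain ⟨hkSS, hknosw, hkcons⟩ := ih
            have hselfR : seg x (k+1) ∈ SStar → (∀ j, j < k+1 → Even j → x j = σ (seg x j)) →
                ∀ r, r <+: seg x (k+1) → ¬ Sw r := by
              intro hSS hcst r hr
              rcases eq_or_ne r (seg x (k+1)) with rfl | hne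
              · refine hreach _ ⟨hSS, ?_⟩
                intro j hj hjev
                rw [seg_length] at hj
                rw [seg_getD hj, seg_take, min_eq_left (by omega)]
                exact hcst j hj hjev
              · have hr' : r <+: seg x k := List.prefix_of_prefix_length_le hr
                  (seg_prefix x (Nat.le_succ k)) (by
                    have h1 := hr.length_le
                    rw [seg_length] at h1 ⊢
                    have h2 : r.length ≠ k + 1 := by
                      intro hl
                      exact hne (hr.eq_of_length (by rw [seg_length, hl]))
                    omega)
                exact hknosw r hr'
            by_cases hkev : Even k
            · have hcond : seg x k ∈ SStar ∧ ∀ r, r <+: seg x k → ¬ Sw r := ⟨hkSS, hknosw⟩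
              have hxk : x k = σ (seg x k) := by
                have := hxcons k hkev
                beta_reduce at this
                rwa [if_pos hcond] at this
              have hstep : seg x (k+1) ∈ SStar := by
                rw [seg_succ, hxk]
                exact hσleg _ hkSS (by rw [seg_length]; exact hkev)
              have hcst : ∀ j, j < k+1 → Even j → x j = σ (seg x j) := by
                intro j hj hjev
                rcases eq_or_ne j k with rfl | hne
                · exact hxk
                · exact hkcons j (by omega) hjev
              exact ⟨hstep, hselfR hstep hcst, hcst⟩
            · have hcst : ∀ j, j < k+1 → Even j → x j = σ (seg x j) := by
                intro j hj hjev
                rcases eq_or_ne j k with rfl | hne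
                · exact absurd hjev hkev
                · exact hkcons j (by omega) hjev
              have hstep : seg x (k+1) ∈ SStar := by
                refine Or.inl ⟨hxS (k+1), ?_⟩
                intro r hr hrne
                have hr' : r <+: seg x k := List.prefix_of_prefix_length_le hr
                  (seg_prefix x (Nat.le_succ k)) (by
                    have h1 := hr.length_le
                    rw [seg_length] at h1 ⊢
                    have h2 : r.length ≠ k + 1 := by
                      intro hl
                      exact hrne (hr.eq_of_length (by rw [seg_length, hl]))
                    omega)
                exact fun hsw => hknosw r hr' hsw
              exact ⟨hstep, hselfR hstep hcst, hcst⟩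
        have hxSS : x ∈ body SStar := fun k => (key k).1
        have hxcons' : ConsWithI σ x := fun k hkev => (key (k+1)).2.2 k (Nat.lt_succ_self k) hkev
        have := hσwin x hxSS hxcons'
        exact ⟨Or.inl this.1, hxS⟩
  exact hng ⟨hp, SStar, starQuasi, starBody, starNws⟩

/-- state machine tracking the current switch point and open-set index. -/
def stAux (cond : List ℕ → ℕ → Bool) : List ℕ → List ℕ × ℕ
  | [] => ([], 0)
  | a :: t =>
    let s := stAux cond t
    if cond ((a :: t).reverse) s.2 then ((a :: t).reverse, s.2 + 1) else s

def st (cond : List ℕ → ℕ → Bool) (q : List ℕ) : List ℕ × ℕ := stAux cond q.reverse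

lemma st_nil (cond : List ℕ → ℕ → Bool) : st cond [] = ([], 0) := rfl

lemma st_snoc (cond : List ℕ → ℕ → Bool) (q : List ℕ) (a : ℕ) :
    st cond (q ++ [a]) =
      if cond (q ++ [a]) (st cond q).2 then (q ++ [a], (st cond q).2 + 1) else st cond q := by
  have h1 : (q ++ [a]).reverse = a :: q.reverse := by simp
  have h2 : (a :: q.reverse).reverse = q ++ [a] := by simp
  rw [st, h1, stAux]
  simp only [h2]
  rfl

lemma nil_good {T' : Set (List ℕ)} (hT'tree : IsGameTree T') (A B : Set (ℕ → ℕ))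
    (Bseq : ℕ → Set (ℕ → ℕ)) (hBopen : ∀ n, IsOpen (Bseq n)) (hBeq : B = ⋂ n, Bseq n)
    (hBA : B ⊆ A) (hnilT' : ([] : List ℕ) ∈ T')
    (hT'nws : ¬ ∃ σ, WinStratI T' (A ∩ body T') σ) :
    Good T' A B [] := by
  classical
  by_contra hng
  have hBsub : ∀ n, B ⊆ Bseq n := fun n => by rw [hBeq]; exact Set.iInter_subset _ n
  -- choose key-claim strategies
  have hksex : ∀ (q : List ℕ) (m : ℕ), ∃ σ, (q ∈ T' ∧ ¬ Good T' A B q) →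
      WinStratI (restrict T' q) ((A ∪ Opn T' A B (Bseq m) q) ∩ body (restrict T' q)) σ := by
    intro q m
    by_cases hq : q ∈ T' ∧ ¬ Good T' A B q
    · obtain ⟨σ, hσ⟩ := keyClaim hT'tree A B (Bseq m) (hBsub m) (hBopen m) hq.1 hq.2
      exact ⟨σ, fun _ => hσ⟩
    · exact ⟨fun _ => 0, fun hc => absurd hc hq⟩
  choose ks hks using hksex
  set cond : List ℕ → ℕ → Bool := fun q m =>
    if q ∈ T' ∧ ¬ Good T' A B q ∧ Nb q ⊆ Bseq m then true else false with hconddef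
  have hcond_iff : ∀ q m, cond q m = true ↔
      (q ∈ T' ∧ ¬ Good T' A B q ∧ Nb q ⊆ Bseq m) := by
    intro q m
    by_cases h : q ∈ T' ∧ ¬ Good T' A B q ∧ Nb q ⊆ Bseq m
    · simp [hconddef, h]
    · simp [hconddef, h]
  set σM : List ℕ → ℕ := fun q => ks (st cond q).1 (st cond q).2 q with hσMdef
  -- invariant of the state machine
  have hinv : ∀ q, (st cond q).1 <+: q ∧ (st cond q).1 ∈ T' ∧ ¬ Good T' A B (st cond q).1 := by
    intro q
    induction q using List.reverseRecOn with
    | nil => rw [st_nil]; exact ⟨List.prefix_refl _, hnilT', hng⟩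
    | append_singleton q a ih =>
      rw [st_snoc]
      by_cases hc : cond (q ++ [a]) (st cond q).2 = true
      · rw [if_pos hc]
        obtain ⟨h1, h2, -⟩ := (hcond_iff _ _).1 hc
        exact ⟨List.prefix_refl _, h1, h2⟩
      · rw [if_neg hc]
        exact ⟨ih.1.trans (List.prefix_append q [a]), ih.2⟩
  -- master strategy is legal
  have hleg : ∀ q ∈ T', Even q.length → q ++ [σM q] ∈ T' := by
    intro q hq hev
    obtain ⟨hpre, hmem, hgood⟩ := hinv q
    have hspec := hks (st cond q).1 (st cond q).2 ⟨hmem, hgood⟩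
    have hqr : q ∈ restrict T' (st cond q).1 := ⟨hq, Or.inr hpre⟩
    exact (hspec.1 q hqr hev).1
  -- master strategy wins
  have hwin : ∀ x ∈ body T', ConsWithI σM x → x ∈ A ∩ body T' := by
    intro x hx hcons
    set s : ℕ → List ℕ × ℕ := fun j => st cond (seg x j) with hsdef
    have hs0 : s 0 = ([], 0) := by rw [hsdef]; simp only [seg_zero]; exact st_nil cond
    have hstep : ∀ j, s (j+1) =
        if cond (seg x (j+1)) (s j).2 then (seg x (j+1), (s j).2 + 1) else s j := by
      intro j
      rw [hsdef]
      simp only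
      rw [seg_succ, st_snoc]
    by_cases hfin : ∃ N, ∀ j, N ≤ j → s j = s N
    · -- finitely many switches
      obtain ⟨N, hN⟩ := hfin
      set r := (s N).1 with hrdef
      set m := (s N).2 with hmdef
      have hsN : s N = (r, m) := rfl
      obtain ⟨hrpre, hrT', hrgood⟩ := hinv (seg x N)
      have hrlen : r.length ≤ N := by
        have := hrpre.length_le
        simpa using this
      have hxr : seg x r.length = r := (prefix_seg hrpre).symm
      -- the state is (r, m) from stage r.length on
      have hstay : ∀ j, (s (j+1)).1.length ≤ j → s (j+1) = s j := by
        intro j hj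
        rw [hstep j] at hj ⊢
        by_cases hc : cond (seg x (j+1)) (s j).2 = true
        · rw [if_pos hc] at hj
          simp at hj
        · rw [if_neg hc]
      have hconst : ∀ d, r.length ≤ N - d → s (N - d) = (r, m) := by
        intro d
        induction d with
        | zero => intro _; simpa using hsN
        | succ d ihd =>
          intro hd
          rcases Nat.lt_or_ge d N with hdN | hdN
          · have he1 : N - (d+1) + 1 = N - d := by omega
            have hd' : r.length ≤ N - d := by omega
            have := hstay (N - (d+1))
            rw [he1] at this
            rw [← this (by rw [ihd hd']; simpa using hd)]
            exact ihd hd'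
          · have : N - (d+1) = N - d := by omega
            rw [this]
            exact ihd (by omega)
      have hconst' : ∀ j, r.length ≤ j → s j = (r, m) := by
        intro j hj
        rcases le_or_gt N j with hNj | hNj
        · rw [hN j hNj]
        · have : j = N - (N - j) := by omega
          rw [this]
          exact hconst (N - j) (by omega)
      have hspec := hks r m ⟨hrT', hrgood⟩
      have hxbr : x ∈ body (restrict T' r) := mem_body_restrict.2 ⟨hx, hxr⟩
      have hcons' : ConsWithI (ks r m) x := by
        intro k hkev
        rcases Nat.lt_or_ge k r.length with hk | hk
        · exact (cons_below hspec.1 hx hxr hk hkev).symm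
        · have := hcons k hkev
          rw [hσMdef] at this
          simp only at this
          have hsk : st cond (seg x k) = (r, m) := hconst' k hk
          rw [hsk] at this
          exact this
      have hwx := hspec.2 x hxbr hcons'
      rcases hwx.1 with hxA | hxO
      · exact ⟨hxA, hx⟩
      · exfalso
        obtain ⟨k, hrk, hrnek, hgk, hnbk⟩ := hxO
        have hklen : r.length < k := by
          have := prefix_ne_lt hrk hrnek
          simpa using this
        have hk1 : k - 1 + 1 = k := by omega
        have hsk : s k = (r, m) := hconst' k (by omega)
        have hsk1 : s (k-1) = (r, m) := hconst' (k-1) (by omega)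
        have := hstep (k-1)
        rw [hk1, hsk, hsk1] at this
        have hcondk : cond (seg x k) m = true :=
          (hcond_iff _ _).2 ⟨hx k, hgk, hnbk⟩
        rw [if_pos hcondk] at this
        have := congrArg Prod.snd this
        simp at this
    · -- infinitely many switches: the play lands in B
      push_neg at hfin
      -- first change after N is a switch with frozen state
      have hchange : ∀ N, ∃ j, N ≤ j ∧ s j = s N ∧
          (s (j+1)).2 = (s j).2 + 1 ∧ cond (seg x (j+1)) (s j).2 = true := by
        intro N
        obtain ⟨j₁, hj₁, hne⟩ := hfin N
        have hex : ∃ t, N ≤ t ∧ s t ≠ s N := ⟨j₁, hj₁, hne⟩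
        set t := Nat.find hex with htdef
        obtain ⟨htN, htne⟩ := Nat.find_spec hex
        have htpos : N < t := by
          rcases lt_or_eq_of_le htN with h | h
          · exact h
          · exact absurd (congrArg s h.symm) htne
        have hprev : s (t-1) = s N := by
          rcases Nat.eq_or_lt_of_le (by omega : N ≤ t - 1) with he | hlt
          · rw [← he]
          · have := Nat.find_min hex (by omega : t - 1 < t)
            push_neg at this
            exact not_not.1 (fun hc => hc (this (by omega)))
        have ht1 : t - 1 + 1 = t := by omega
        refine ⟨t - 1, by omega, hprev, ?_, ?_⟩
        · rw [ht1]
          have := hstep (t-1)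
          rw [ht1] at this
          by_cases hc : cond (seg x t) (s (t-1)).2 = true
          · rw [if_pos hc] at this
            rw [this]
          · rw [if_neg hc] at this
            exact absurd (this.trans hprev) htne
        · rw [ht1]
          have := hstep (t-1)
          rw [ht1] at this
          by_cases hc : cond (seg x t) (s (t-1)).2 = true
          · exact hc
          · rw [if_neg hc] at this
            exact absurd (this.trans hprev) htne
      -- every index value is attained
      have attain : ∀ d j, ∃ t, j ≤ t ∧ (s t).2 = (s j).2 + d := by
        intro d
        induction d with
        | zero => intro j; exact ⟨j, le_rfl, rfl⟩
        | succ d ihd =>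
          intro j
          obtain ⟨j', hjj', hsj', hinc, -⟩ := hchange j
          obtain ⟨t, ht, hts⟩ := ihd (j'+1)
          refine ⟨t, by omega, ?_⟩
          rw [hts, hinc, hsj']
          ring
      have hxB : x ∈ B := by
        rw [hBeq]
        refine Set.mem_iInter.2 fun i => ?_
        obtain ⟨t, -, hts⟩ := attain i 0
        rw [hs0] at hts
        simp only [Nat.zero_add] at hts
        obtain ⟨j, hjt, hsj, hinc, hcondj⟩ := hchange t
        have hsj2 : (s j).2 = i := by rw [hsj, hts]
        rw [hsj2] at hcondj
        exact ((hcond_iff _ _).1 hcondj).2.2 (mem_Nb_seg x (j+1))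
      exact ⟨hBA hxB, hx⟩
  exact hT'nws ⟨σM, hleg, hwin⟩

end Covering

/-- **Davis's covering lemma** (the paper's Lemma 31): if `B ⊆ A ⊆ [T]` with
`B` a `Gδ` set and player I has no winning strategy in `G(A; T)`, then there
is a quasi-strategy `S` for player II in `T` with `[S] ∩ B = ∅` such that
player I has no winning strategy in `G(A ∩ [S]; S)`. -/
theorem covering_lemma (T : Set (List ℕ)) (hT : IsGameTree T)
    (A B : Set (ℕ → ℕ)) (hA : A ⊆ body T) (hBA : B ⊆ A) (hB : IsGδ B)
    (hI : ¬ ∃ σ, WinStratI T A σ) :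
    ∃ S : Set (List ℕ), QuasiII T S ∧ body S ∩ B = ∅ ∧
      ¬ ∃ σ, WinStratI S (A ∩ body S) σ := by
  classical
  obtain ⟨Bseq, hBopen, hBeq⟩ := Covering.isGδ_seq hB
  have hA' : A ∩ body T = A := Set.inter_eq_self_of_subset_left hA
  have hIT : ¬ ∃ σ, WinStratI T (A ∩ body T) σ := by rwa [hA']
  set T' := NonLosing T A with hT'def
  have hT'quasi : QuasiII T T' := Covering.nonLosing_quasi hT hIT
  have hT'tree : IsGameTree T' := hT'quasi.1
  have hT'nws : ¬ ∃ σ, WinStratI T' (A ∩ body T') σ := Covering.nonLosing_no_ws hT hIT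
  have hnilT' : ([] : List ℕ) ∈ T' := Covering.nil_mem_nonLosing hT hIT
  have hGoodNil : Good T' A B [] :=
    Covering.nil_good hT'tree A B Bseq hBopen hBeq hBA hnilT' hT'nws
  obtain ⟨-, S, hSq, hSB, hSnws⟩ := hGoodNil
  rw [Covering.restrict_nil] at hSq
  refine ⟨S, ⟨hSq.1, hSq.2.1.trans Covering.nonLosing_subset, ?_⟩, hSB, hSnws⟩
  intro q hq hev n hn
  exact hSq.2.2 q hq hev n (hT'quasi.2.2 q (hSq.2.1 hq) hev n hn)
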